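/- There exists a subfield K ⊆ ℝ of cardinality 𝔠 such that the set of squares D = {y² | y ∈ K}, regarded as a subset of ℝ, is not a Borel subset of ℝ, i.e. D ∉ 𝓑(ℝ). -/

import Mathlib

open Cardinal Polynomial

lemma aux_isAlgebraic_of_mem_adjoin {F E : Type*} [Field F] [Field E] [Algebra F E]
    {s : Set E} {a : E} (ha : a ∈ IntermediateField.adjoin F s) :
    IsAlgebraic (Algebra.adjoin F s) a := by
  rw [IntermediateField.mem_adjoin_iff] at ha
  obtain ⟨r, q, hrq⟩ := ha
  have hmem : ∀ p : MvPolynomial s F, MvPolynomial.aeval Subtype.val p ∈ Algebra.adjoin F s := by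
    intro p
    have : Algebra.adjoin F s = Algebra.adjoin F (Set.range (Subtype.val : s → E)) := by
      rw [Subtype.range_coe]
    rw [this, Algebra.adjoin_range_eq_range_aeval]
    exact ⟨p, rfl⟩
  set pv := MvPolynomial.aeval (Subtype.val : s → E) r with hpv
  set qv := MvPolynomial.aeval (Subtype.val : s → E) q with hqv
  by_cases hq : qv = 0
  · rw [hq, div_zero] at hrq
    rw [hrq]
    exact isAlgebraic_zero
  · refine ⟨C (⟨qv, hmem q⟩ : Algebra.adjoin F s) * X - C ⟨pv, hmem r⟩, ?_, ?_⟩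
    · intro h
      have := congrArg (fun P => Polynomial.coeff P 1) h
      simp at this
      exact hq (congrArg Subtype.val this)
    · have : (Polynomial.aeval a) (C (⟨qv, hmem q⟩ : Algebra.adjoin F s) * X - C ⟨pv, hmem r⟩)
          = qv * a - pv := by
        simp [Subalgebra.algebraMap_eq]
      rw [this, hrq, mul_div_cancel₀ _ hq, sub_self]

lemma aux_not_mem_adjoin {F E ι : Type*} [Field F] [Field E] [Algebra F E]
    {x : ι → E} (hx : AlgebraicIndependent F x) {B : Set ι} {i : ι} (hi : i ∉ B) :
    x i ∉ IntermediateField.adjoin F (x '' B) := by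
  intro hmem
  have hy : AlgebraicIndependent F (x ∘ (Subtype.val : B → ι)) :=
    hx.comp _ Subtype.val_injective
  have hg : Function.Injective (fun o : Option B => o.elim i Subtype.val) := by
    rintro (_ | a) (_ | b) h <;> simp only [Option.elim] at h
    · rfl
    · subst h; exact absurd b.2 hi
    · subst h; exact absurd a.2 hi
    · exact congrArg Option.some (Subtype.val_injective h)
  have hz : AlgebraicIndependent F (fun o : Option B => (o.elim (x i) (x ∘ Subtype.val))) := by
    have := hx.comp _ hg
    convert this using 1
    funext o
    cases o <;> rfl
  have htr := (hy.option_iff_transcendental (x i)).mp hz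
  have hrange : Set.range (x ∘ (Subtype.val : B → ι)) = x '' B := by
    rw [Set.range_comp, Subtype.range_coe]
  rw [hrange] at htr
  exact htr (aux_isAlgebraic_of_mem_adjoin hmem)

/-- There is a subfield `K ⊆ ℝ` of cardinality `𝔠` such that the set `D = {y² | y ∈ K}` of
squares of `K`, regarded as a subset of `ℝ`, is not a Borel subset of `ℝ`.
(The measurable sets of `ℝ` are exactly the Borel sets.) -/
theorem exists_subfield_with_nonBorel_squares :
    ∃ K : Subfield ℝ, #K = Cardinal.continuum ∧
      ¬ MeasurableSet {x : ℝ | ∃ y ∈ K, x = y ^ 2} := by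
  by_contra hcon
  push_neg at hcon
  -- a transcendence basis of ℝ over ℚ
  obtain ⟨T, hT⟩ := exists_isTranscendenceBasis ℚ ℝ
  have htrans : Algebra.Transcendental ℚ ℝ := by
    rw [Algebra.transcendental_iff_not_isAlgebraic]
    intro halg
    have h1 : #ℝ ≤ max #ℚ ℵ₀ := Algebra.IsAlgebraic.cardinalMk_le_max ℚ ℝ
    rw [Cardinal.mk_real, Cardinal.mk_denumerable, max_self] at h1
    exact absurd h1 (Cardinal.aleph0_lt_continuum).not_ge
  haveI hne : Nonempty ↥T := hT.nonempty_iff_transcendental.2 htrans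
  have hTcard : #↥T = 𝔠 := by
    have h1 := hT.lift_cardinalMk_eq_max_lift
    simp only [Cardinal.lift_id] at h1
    rw [Cardinal.mk_real, Cardinal.mk_denumerable] at h1
    refine le_antisymm (le_trans (Cardinal.mk_le_of_injective Subtype.val_injective)
      Cardinal.mk_real.le) ?_
    by_contra hlt
    push_neg at hlt
    have h3 : (ℵ₀ ⊔ #↥T ⊔ ℵ₀ : Cardinal) < 𝔠 :=
      max_lt (max_lt Cardinal.aleph0_lt_continuum hlt) Cardinal.aleph0_lt_continuum
    exact absurd h1 h3.ne'
  -- an algebraically independent family indexed by ℝ ⊕ ℝ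
  have hcard2 : #(ℝ ⊕ ℝ) = #↥T := by
    rw [Cardinal.mk_sum, Cardinal.mk_real, Cardinal.lift_id, hTcard]
    exact Cardinal.add_eq_self Cardinal.aleph0_le_continuum
  obtain ⟨e⟩ := Cardinal.eq.mp hcard2
  set x : ℝ ⊕ ℝ → ℝ := fun i => ((e i : ↥T) : ℝ) with hxdef
  have hxi : AlgebraicIndependent ℚ x := hT.1.comp e e.injective
  -- the fields
  set K : Set ℝ → IntermediateField ℚ ℝ :=
    fun S => IntermediateField.adjoin ℚ (x '' (Sum.inl '' Set.univ ∪ Sum.inr '' S)) with hKdef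
  set D : Set ℝ → Set ℝ := fun S => {r : ℝ | ∃ y ∈ (K S).toSubfield, r = y ^ 2} with hDdef
  have hmemK : ∀ (S : Set ℝ) (t : ℝ), x (Sum.inr t) ∈ K S ↔ t ∈ S := by
    intro S t
    constructor
    · intro hmem
      by_contra ht
      have hi : Sum.inr t ∉ (Sum.inl '' Set.univ ∪ Sum.inr '' S : Set (ℝ ⊕ ℝ)) := by
        rintro (⟨a, -, h⟩ | ⟨a, ha, h⟩)
        · exact Sum.inl_ne_inr h
        · exact ht (Sum.inr_injective h ▸ ha)
      exact aux_not_mem_adjoin hxi hi hmem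
    · intro ht
      exact IntermediateField.subset_adjoin _ _ ⟨Sum.inr t, Or.inr ⟨t, ht, rfl⟩, rfl⟩
  -- the squares determine the field
  have hKK : ∀ S S' : Set ℝ, D S = D S' → ∀ a : ℝ, a ∈ K S → a ∈ K S' := by
    intro S S' hD a ha
    have h1 : ((a + 1) / 2) ^ 2 ∈ D S :=
      ⟨(a + 1) / 2, IntermediateField.mem_toSubfield _ _ |>.2
        (div_mem (add_mem ha (one_mem _)) (by rw [show (2:ℝ) = 1 + 1 by norm_num]; exact add_mem (one_mem _) (one_mem _))), rfl⟩
    have h2 : ((a - 1) / 2) ^ 2 ∈ D S :=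
      ⟨(a - 1) / 2, IntermediateField.mem_toSubfield _ _ |>.2
        (div_mem (sub_mem ha (one_mem _)) (by rw [show (2:ℝ) = 1 + 1 by norm_num]; exact add_mem (one_mem _) (one_mem _))), rfl⟩
    rw [hD] at h1 h2
    obtain ⟨y, hy, hy2⟩ := h1
    obtain ⟨z, hz, hz2⟩ := h2
    have key : a = y ^ 2 - z ^ 2 := by
      rw [← hy2, ← hz2]; ring
    rw [key]
    exact sub_mem (pow_mem ((IntermediateField.mem_toSubfield _ _).1 hy) 2)
      (pow_mem ((IntermediateField.mem_toSubfield _ _).1 hz) 2)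
  have hDinj : Function.Injective D := by
    intro S S' hD
    ext t
    constructor
    · intro ht
      exact (hmemK S' t).1 (hKK S S' hD _ ((hmemK S t).2 ht))
    · intro ht
      exact (hmemK S t).1 (hKK S' S hD.symm _ ((hmemK S' t).2 ht))
  -- each field has cardinality continuum
  have hcardK : ∀ S : Set ℝ, #((K S).toSubfield) = 𝔠 := by
    intro S
    refine le_antisymm (le_trans (Cardinal.mk_le_of_injective Subtype.val_injective)
      Cardinal.mk_real.le) ?_
    rw [← Cardinal.mk_real]
    refine Cardinal.mk_le_of_injective (f := fun r : ℝ =>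
      (⟨x (Sum.inl r), (IntermediateField.mem_toSubfield _ _).2
        (IntermediateField.subset_adjoin _ _ ⟨Sum.inl r, Or.inl ⟨r, trivial, rfl⟩, rfl⟩)⟩ :
        (K S).toSubfield)) ?_
    intro r r' h
    have := congrArg Subtype.val h
    exact Sum.inl_injective (hxi.injective this)
  -- all the square sets are Borel, by assumption
  have hmeas : ∀ S : Set ℝ, MeasurableSet (D S) := fun S => hcon (K S).toSubfield (hcardK S)
  -- but there are at most continuum many Borel sets
  have hb : #{t : Set ℝ | MeasurableSet t} ≤ 𝔠 := by
    have h4 : {t : Set ℝ | MeasurableSet t}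
        = {t : Set ℝ | @MeasurableSet ℝ (MeasurableSpace.generateFrom
            (Set.range (Set.Ioi : ℝ → Set ℝ))) t} := by
      rw [← borel_eq_generateFrom_Ioi ℝ, ← BorelSpace.measurable_eq (α := ℝ)]
    rw [h4]
    exact MeasurableSpace.cardinal_measurableSet_le_continuum
      (Cardinal.mk_range_le.trans Cardinal.mk_real.le)
  have hfinal : #(Set ℝ) ≤ 𝔠 := by
    refine le_trans (Cardinal.mk_le_of_injective
      (f := fun S : Set ℝ => (⟨D S, hmeas S⟩ : {t : Set ℝ | MeasurableSet t})) ?_) hb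
    intro S S' h
    exact hDinj (congrArg Subtype.val h)
  rw [Cardinal.mk_set, Cardinal.mk_real] at hfinal
  exact absurd hfinal (Cardinal.cantor 𝔠).not_ge
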